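/- In the Cantor system (X,f) of the construction, for every x ∈ X with x ≠ p one has limsup_{k→∞} d(f^k(x), p) > 0, where p = (v_{0,0}, v_{1,0}, v_{2,0}, …). -/

import Mathlib

open Filter Topology
open scoped ENNReal

/-- `φ` is a graph homomorphism from `(V₁,E₁)` to `(V₂,E₂)`. -/
def IsGraphHom {V₁ V₂ : Type*} (E₁ : V₁ → V₁ → Prop) (E₂ : V₂ → V₂ → Prop)
    (φ : V₁ → V₂) : Prop :=
  ∀ u v, E₁ u v → E₂ (φ u) (φ v)

/-- `φ` is edge surjective. -/
def IsEdgeSurj {V₁ V₂ : Type*} (E₁ : V₁ → V₁ → Prop) (E₂ : V₂ → V₂ → Prop)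
    (φ : V₁ → V₂) : Prop :=
  ∀ u v, E₂ u v → ∃ u' v', E₁ u' v' ∧ φ u' = u ∧ φ v' = v

/-- `φ` is +directional. -/
def IsPlusDirectional {V₁ V₂ : Type*} (E₁ : V₁ → V₁ → Prop) (φ : V₁ → V₂) : Prop :=
  ∀ u v v', E₁ u v → E₁ u v' → φ v = φ v'

/-- `φ` is bidirectional. -/
def IsBidirectional {V₁ V₂ : Type*} (E₁ : V₁ → V₁ → Prop) (φ : V₁ → V₂) : Prop :=
  IsPlusDirectional E₁ φ ∧ ∀ u u' v, E₁ u v → E₁ u' v → φ u = φ u'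

/-- `φ` is a cover: a +directional edge-surjective graph homomorphism. -/
def IsCover {V₁ V₂ : Type*} (E₁ : V₁ → V₁ → Prop) (E₂ : V₂ → V₂ → Prop)
    (φ : V₁ → V₂) : Prop :=
  IsGraphHom E₁ E₂ φ ∧ IsPlusDirectional E₁ φ ∧ IsEdgeSurj E₁ E₂ φ

/-- every vertex has an incoming and an outgoing edge. -/
def IsSurjDigraph {V : Type*} (E : V → V → Prop) : Prop :=
  (∀ v, ∃ u, E u v) ∧ ∀ u, ∃ v, E u v

/-- the inverse limit `V_𝒢` of a sequence of graph maps. -/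
abbrev InvLim (V : ℕ → Type*) (φ : ∀ n, V (n + 1) → V n) : Type _ :=
  { x : ∀ n, V n // ∀ n, φ n (x (n + 1)) = x n }

/-- the relation `E_𝒢` on `V_𝒢`. -/
def ERel {V : ℕ → Type*} (E : ∀ n, V n → V n → Prop) (φ : ∀ n, V (n + 1) → V n)
    (x y : InvLim V φ) : Prop :=
  ∀ n, E n (x.1 n) (y.1 n)

/-- the product-of-discrete topology on the inverse limit, given explicitly. -/
def invLimTop (V : ℕ → Type*) (φ : ∀ n, V (n + 1) → V n) :
    TopologicalSpace (InvLim V φ) :=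
  @instTopologicalSpaceSubtype _ _ (@Pi.topologicalSpace ℕ V fun _ => ⊥)

/-- the distance function of an explicitly given metric space structure. -/
noncomputable def mdist {X : Type*} (m : MetricSpace X) (x y : X) : ℝ :=
  @dist X m.toDist x y

/-- the topology induced by an explicitly given metric space structure. -/
def mtop {X : Type*} (m : MetricSpace X) : TopologicalSpace X :=
  @UniformSpace.toTopologicalSpace X m.toUniformSpace

/-- the (half-open) list of vertices `vtx i 0, vtx i 1, …, vtx i (len-1)` of
the circuit `c_{n,i}`, the final vertex (equal to the initial one) omitted. -/
def circList {Vn : Type*} (vtx : ℕ → ℕ → Vn) (i len : ℕ) : List Vn :=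
  List.ofFn fun j : Fin len => vtx i (j : ℕ)

namespace Stmt13Aux

variable {V : ℕ → Type} {len : ℕ → ℕ → ℕ} {v0 : ∀ n, V n} {vtx : ∀ n, ℕ → ℕ → V n}

lemma sum_shift (g : ℕ → ℕ) (a s : ℕ) :
    ∑ t ∈ Finset.range (s + 1), g (a + t)
      = g a + ∑ t ∈ Finset.range s, g (a + 1 + t) := by
  rw [Finset.sum_range_succ']
  simp only [Nat.add_zero]
  rw [Nat.add_comm]
  congr 1
  refine Finset.sum_congr rfl fun t _ => ?_
  congr 1
  omega

lemma sum_split (g : ℕ → ℕ) (a b c : ℕ) (hab : a ≤ b) (hbc : b ≤ c) :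
    ∑ t ∈ Finset.range (c - a), g (a + t)
      = (∑ t ∈ Finset.range (b - a), g (a + t)) + ∑ t ∈ Finset.range (c - b), g (b + t) := by
  rw [← Finset.sum_Ico_eq_sum_range, ← Finset.sum_Ico_eq_sum_range,
    ← Finset.sum_Ico_eq_sum_range]
  exact (Finset.sum_Ico_consecutive _ hab hbc).symm

lemma circList_length (N i L : ℕ) : (circList (vtx N) i L).length = L := by
  simp [circList]

lemma circList_getElem (N i L q : ℕ) (h : q < (circList (vtx N) i L).length) :
    (circList (vtx N) i L)[q] = vtx N i q := by
  simp [circList]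

lemma wlen {N : ℕ} : ∀ (c a : ℕ),
    ((List.range' a c).flatMap fun k =>
      circList (vtx N) k (len N k) ++ circList (vtx N) k (len N k)).length
      = 2 * ∑ t ∈ Finset.range c, len N (a + t)
  | 0, a => by simp
  | (c+1), a => by
      rw [List.range'_succ, List.flatMap_cons, List.length_append, wlen c (a+1),
        sum_shift]
      simp [circList]
      omega

lemma FMget {N : ℕ} : ∀ (c a K r q : ℕ), a ≤ K → K < a + c → r < len N K →
    (q = 2 * (∑ t ∈ Finset.range (K - a), len N (a + t)) + r ∨
      q = 2 * (∑ t ∈ Finset.range (K - a), len N (a + t)) + len N K + r) →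
    ∀ (hq : q < ((List.range' a c).flatMap fun k =>
      circList (vtx N) k (len N k) ++ circList (vtx N) k (len N k)).length),
    ((List.range' a c).flatMap fun k =>
      circList (vtx N) k (len N k) ++ circList (vtx N) k (len N k))[q] = vtx N K r
  | 0, a, K, r, q => by omega
  | (c+1), a, K, r, q => by
      intro haK hKc hr hdec hq
      have hEq : ((List.range' a (c+1)).flatMap fun k =>
            circList (vtx N) k (len N k) ++ circList (vtx N) k (len N k))
          = (circList (vtx N) a (len N a) ++ circList (vtx N) a (len N a))
            ++ ((List.range' (a+1) c).flatMap fun k =>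
              circList (vtx N) k (len N k) ++ circList (vtx N) k (len N k)) := by
        rw [List.range'_succ, List.flatMap_cons]
      rw [List.getElem_of_eq hEq hq]
      rcases eq_or_lt_of_le haK with rfl | haK'
      · -- K = a
        simp only [Nat.sub_self, Finset.range_zero, Finset.sum_empty, Nat.mul_zero,
          Nat.zero_add] at hdec
        have hql : q < (circList (vtx N) a (len N a) ++ circList (vtx N) a (len N a)).length := by
          simp only [List.length_append, circList_length]; omega
        rw [List.getElem_append_left hql]
        rcases hdec with rfl | rfl
        · rw [List.getElem_append_left (by rw [circList_length]; omega)]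
          rw [circList_getElem]
        · rw [List.getElem_append_right (by rw [circList_length]; omega)]
          rw [circList_getElem]
          congr 1
          rw [circList_length]
          omega
      · -- a < K
        have hsplit : ∑ t ∈ Finset.range (K - a), len N (a + t)
            = len N a + ∑ t ∈ Finset.range (K - (a+1)), len N (a + 1 + t) := by
          have h1 : K - a = (K - (a+1)) + 1 := by omega
          rw [h1, sum_shift]
        have hge : (circList (vtx N) a (len N a) ++ circList (vtx N) a (len N a)).length ≤ q := by
          simp only [List.length_append, circList_length]; omega
        rw [List.getElem_append_right hge]
        simp only [List.length_append, circList_length]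
        exact FMget c (a+1) K r (q - (len N a + len N a)) (by omega) (by omega) hr (by omega) _

lemma FMdecomp {N : ℕ} : ∀ (c a q : ℕ),
    q < 2 * ∑ t ∈ Finset.range c, len N (a + t) →
    ∃ K r, a ≤ K ∧ K < a + c ∧ r < len N K ∧
      (q = 2 * (∑ t ∈ Finset.range (K - a), len N (a + t)) + r ∨
        q = 2 * (∑ t ∈ Finset.range (K - a), len N (a + t)) + len N K + r)
  | 0, a, q => by simp
  | (c+1), a, q => by
      intro hq
      rw [sum_shift] at hq
      by_cases h : q < 2 * len N a
      · refine ⟨a, ?_⟩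
        simp only [Nat.sub_self, Finset.range_zero, Finset.sum_empty, Nat.mul_zero,
          Nat.zero_add]
        by_cases h2 : q < len N a
        · exact ⟨q, le_rfl, by omega, h2, Or.inl rfl⟩
        · exact ⟨q - len N a, le_rfl, by omega, by omega, Or.inr (by omega)⟩
      · obtain ⟨K, r, h1, h2, h3, h4⟩ := FMdecomp (N := N) c (a+1) (q - 2 * len N a) (by omega)
        refine ⟨K, r, by omega, by omega, h3, ?_⟩
        have hsplit : ∑ t ∈ Finset.range (K - a), len N (a + t)
            = len N a + ∑ t ∈ Finset.range (K - (a+1)), len N (a + 1 + t) := by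
          have h1' : K - a = (K - (a+1)) + 1 := by omega
          rw [h1', sum_shift]
        omega


variable {φ : ∀ n, V (n + 1) → V n}

section Phi

variable (hrec : ∀ n i, 1 ≤ i → i ≤ n →
      len (n + 1) i = 2 + 2 * ∑ j ∈ Finset.Icc i n, len n j)
variable (hphiwalk : ∀ n i, 1 ≤ i → i ≤ n →
      List.map (φ n) (circList (vtx (n + 1)) i (len (n + 1) i)) =
        v0 n :: (((List.range' i (n + 1 - i)).flatMap fun k =>
          circList (vtx n) k (len n k) ++ circList (vtx n) k (len n k)) ++ [v0 n]))

include hrec in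
lemma lenrec {N i : ℕ} (h1 : 1 ≤ i) (h2 : i ≤ N) :
    len (N + 1) i = 2 + 2 * ∑ t ∈ Finset.range (N + 1 - i), len N (i + t) := by
  rw [hrec N i h1 h2]
  congr 1
  rw [← Finset.Ico_add_one_right_eq_Icc, Finset.sum_Ico_eq_sum_range]

include hphiwalk in
lemma phiAt {N i q : ℕ} (h1 : 1 ≤ i) (h2 : i ≤ N) (hq : q < len (N + 1) i) :
    φ N (vtx (N + 1) i q) =
      (v0 N :: (((List.range' i (N + 1 - i)).flatMap fun k =>
        circList (vtx N) k (len N k) ++ circList (vtx N) k (len N k)) ++ [v0 N]))[q]'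
        (by rw [← hphiwalk N i h1 h2]; simpa [circList] using hq) := by
  have hlq : q < (List.map (φ N) (circList (vtx (N + 1)) i (len (N + 1) i))).length := by
    simpa [circList] using hq
  rw [← List.getElem_of_eq (hphiwalk N i h1 h2) hlq, List.getElem_map, circList_getElem]

include hrec hphiwalk in
lemma phiE {N i K r : ℕ} (h1 : 1 ≤ i) (h2 : i ≤ N) (hiK : i ≤ K) (hKN : K ≤ N)
    (hr : r < len N K) (q : ℕ)
    (hdec : q = 1 + 2 * (∑ t ∈ Finset.range (K - i), len N (i + t)) + r ∨
      q = 1 + 2 * (∑ t ∈ Finset.range (K - i), len N (i + t)) + len N K + r) :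
    φ N (vtx (N + 1) i q) = vtx N K r := by
  have hsp : ∑ t ∈ Finset.range (N + 1 - i), len N (i + t)
      = (∑ t ∈ Finset.range (K - i), len N (i + t))
        + ∑ t ∈ Finset.range (N + 1 - K), len N (K + t) :=
    sum_split _ i K (N + 1) hiK (by omega)
  have hfir : ∑ t ∈ Finset.range (N + 1 - K), len N (K + t)
      = len N K + ∑ t ∈ Finset.range (N - K), len N (K + 1 + t) := by
    have h : N + 1 - K = (N - K) + 1 := by omega
    rw [h, sum_shift]
  have hq : q < len (N + 1) i := by rw [lenrec hrec h1 h2]; omega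
  rw [phiAt hphiwalk h1 h2 hq]
  obtain ⟨q', rfl⟩ : ∃ q', q = q' + 1 := ⟨q - 1, by omega⟩
  rw [List.getElem_cons_succ]
  rw [List.getElem_append_left (by rw [wlen]; omega)]
  exact FMget (N + 1 - i) i K r q' hiK (by omega) hr (by omega) _

include hrec hphiwalk in
lemma phiLast {N i : ℕ} (h1 : 1 ≤ i) (h2 : i ≤ N) :
    φ N (vtx (N + 1) i (len (N + 1) i - 1)) = v0 N := by
  have hL := lenrec (len := len) hrec h1 h2
  obtain ⟨q', hq'⟩ : ∃ q', len (N + 1) i - 1 = q' + 1 := ⟨len (N + 1) i - 2, by omega⟩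
  rw [hq']
  rw [phiAt hphiwalk h1 h2 (by omega)]
  rw [List.getElem_cons_succ]
  rw [List.getElem_append_right (by rw [wlen]; omega)]
  simp

include hphiwalk in
lemma phiRange {N i q : ℕ} (h1 : 1 ≤ i) (h2 : i ≤ N) (hq : q < len (N + 1) i) :
    φ N (vtx (N + 1) i q) = v0 N ∨ ∃ K s, i ≤ K ∧ K ≤ N ∧ s < len N K ∧
      φ N (vtx (N + 1) i q) = vtx N K s := by
  have hm : φ N (vtx (N + 1) i q) ∈ (v0 N :: (((List.range' i (N + 1 - i)).flatMap fun k =>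
      circList (vtx N) k (len N k) ++ circList (vtx N) k (len N k)) ++ [v0 N])) := by
    rw [phiAt hphiwalk h1 h2 hq]
    exact List.getElem_mem _
  rcases List.mem_cons.mp hm with h | h
  · exact Or.inl h
  rcases List.mem_append.mp h with h | h
  · obtain ⟨k, hk, hmem⟩ := List.mem_flatMap.mp h
    have hkr : i ≤ k ∧ k < i + (N + 1 - i) := List.mem_range'_1.mp hk
    have hmem2 : φ N (vtx (N + 1) i q) ∈ circList (vtx N) k (len N k) := by
      rcases List.mem_append.mp hmem with h' | h' <;> exact h'
    rw [circList, List.mem_ofFn] at hmem2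
    obtain ⟨⟨s, hs⟩, hfs⟩ := hmem2
    exact Or.inr ⟨k, s, hkr.1, by omega, hs, hfs.symm⟩
  · simp only [List.mem_singleton] at h
    exact Or.inl h

end Phi


def piDown {V : ℕ → Type} (φ : ∀ n, V (n + 1) → V n) (n : ℕ) : ∀ k, V (n + k) → V n
  | 0 => id
  | (k+1) => fun u => piDown φ n k (φ (n + k) u)

def bpos (len : ℕ → ℕ → ℕ) (n : ℕ) : ℕ → ℕ
  | 0 => len n n - 1
  | (k+1) => 1 + len (n + k) n + bpos len n k

def Bpos (len : ℕ → ℕ → ℕ) (n k i : ℕ) : ℕ :=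
  1 + 2 * (∑ t ∈ Finset.range (n - i), len (n + k) (i + t)) + len (n + k) n + bpos len n k

lemma bpos_eq (len : ℕ → ℕ → ℕ) (n k : ℕ) : Bpos len n k n = bpos len n (k+1) := by
  simp [Bpos, bpos]

section Main

variable (hends : ∀ n i, 1 ≤ i → i ≤ n → vtx n i 0 = v0 n ∧ vtx n i (len n i) = v0 n)
variable (hlen2 : ∀ n i, 1 ≤ i → i ≤ n → 2 ≤ len n i)
variable (hrec : ∀ n i, 1 ≤ i → i ≤ n →
      len (n + 1) i = 2 + 2 * ∑ j ∈ Finset.Icc i n, len n j)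
variable (hphi0 : ∀ n, φ n (v0 (n + 1)) = v0 n)
variable (hphitop : ∀ n j, j ≤ len (n + 1) (n + 1) → φ n (vtx (n + 1) (n + 1) j) = v0 n)
variable (hphiwalk : ∀ n i, 1 ≤ i → i ≤ n →
      List.map (φ n) (circList (vtx (n + 1)) i (len (n + 1) i)) =
        v0 n :: (((List.range' i (n + 1 - i)).flatMap fun k =>
          circList (vtx n) k (len n k) ++ circList (vtx n) k (len n k)) ++ [v0 n]))

include hphi0 in
lemma piDown_v0 (n : ℕ) : ∀ k, piDown φ n k (v0 (n + k)) = v0 n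
  | 0 => rfl
  | (k+1) => by
      show piDown φ n k (φ (n + k) (v0 (n + k + 1))) = v0 n
      rw [hphi0 (n + k)]
      exact piDown_v0 n k

include hends hphi0 hphitop hphiwalk in
lemma Apos (n : ℕ) : ∀ k i j, n + 1 ≤ i → i ≤ n + k → j ≤ len (n + k) i →
    piDown φ n k (vtx (n + k) i j) = v0 n
  | 0 => by omega
  | (k+1) => by
      intro i j hi1 hi2 hj
      replace hi2 : i ≤ n + k + 1 := hi2
      replace hj : j ≤ len (n + k + 1) i := hj
      show piDown φ n k (φ (n + k) (vtx (n + k + 1) i j)) = v0 n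
      by_cases hit : i = n + k + 1
      · subst hit
        rw [hphitop (n + k) j hj]
        exact piDown_v0 hphi0 n k
      · have hi2' : i ≤ n + k := by omega
        rcases Nat.eq_or_lt_of_le hj with heq | hlt
        · rw [heq, (hends (n + k + 1) i (by omega) (by omega)).2, hphi0 (n + k)]
          exact piDown_v0 hphi0 n k
        · rcases phiRange hphiwalk (N := n + k) (by omega) hi2' hlt with h | ⟨K, s, hK1, hK2, hs, h⟩
          · rw [h]
            exact piDown_v0 hphi0 n k
          · rw [h]
            rcases Nat.eq_zero_or_pos s with rfl | hs0
            · rw [(hends (n + k) K (by omega) hK2).1]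
              exact piDown_v0 hphi0 n k
            · exact Apos n k K s (by omega) hK2 (le_of_lt hs)

include hlen2 hrec in
lemma glow (n : ℕ) (hn : 1 ≤ n) : ∀ k,
    k + 1 + bpos len n k ≤ len (n + k) n + 2 * ∑ t ∈ Finset.range k, len (n + k) (n + 1 + t)
  | 0 => by
      have := hlen2 n n hn le_rfl
      simp only [bpos, Nat.add_zero, Finset.range_zero, Finset.sum_empty]
      omega
  | (k+1) => by
      have ih := glow n hn k
      show k + 1 + 1 + bpos len n (k + 1)
          ≤ len (n + k + 1) n + 2 * ∑ t ∈ Finset.range (k + 1), len (n + k + 1) (n + 1 + t)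
      have hsplit : len (n + k + 1) n = 2 + 2 * ∑ t ∈ Finset.range (k + 1), len (n + k) (n + t) := by
        have h := lenrec (len := len) hrec (N := n + k) hn (by omega)
        rw [show n + k + 1 - n = k + 1 from by omega] at h
        exact h
      have hshift : ∑ t ∈ Finset.range (k + 1), len (n + k) (n + t)
          = len (n + k) n + ∑ t ∈ Finset.range k, len (n + k) (n + 1 + t) := by
        have := sum_shift (fun j => len (n + k) j) n k
        simpa using this
      simp only [bpos]
      omega

include hlen2 hrec in
lemma gap (n : ℕ) (hn : 1 ≤ n) (k i : ℕ) (h1 : 1 ≤ i) (h2 : i ≤ n) :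
    Bpos len n k i + (k + 2) ≤ len (n + k + 1) i := by
  have hlr : len (n + k + 1) i = 2 + 2 * ∑ t ∈ Finset.range (n + k + 1 - i), len (n + k) (i + t) :=
    lenrec (len := len) hrec (N := n + k) h1 (by omega)
  have hsp1 : ∑ t ∈ Finset.range (n + k + 1 - i), len (n + k) (i + t)
      = (∑ t ∈ Finset.range (n - i), len (n + k) (i + t))
        + ∑ t ∈ Finset.range (n + k + 1 - n), len (n + k) (n + t) := by
    exact sum_split (fun j => len (n + k) j) i n (n + k + 1) h2 (by omega)
  have hsp2 : ∑ t ∈ Finset.range (k + 1), len (n + k) (n + t)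
      = len (n + k) n + ∑ t ∈ Finset.range k, len (n + k) (n + 1 + t) := by
    have := sum_shift (fun j => len (n + k) j) n k
    simpa using this
  have hg := glow (len := len) hlen2 hrec n hn k
  rw [show n + k + 1 - n = k + 1 from by omega] at hsp1
  simp only [Bpos]
  omega

include hlen2 hrec hphiwalk in
lemma Cpos (n : ℕ) (hn : 1 ≤ n) : ∀ k i, 1 ≤ i → i ≤ n →
    piDown φ n (k + 1) (vtx (n + k + 1) i (Bpos len n k i)) = vtx n n (len n n - 1)
  | 0 => by
      intro i h1 h2
      show φ n (vtx (n + 1) i (Bpos len n 0 i)) = vtx n n (len n n - 1)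
      exact phiE hrec hphiwalk h1 h2 h2 le_rfl
        (by have := hlen2 n n hn le_rfl; omega) _ (Or.inr rfl)
  | (k+1) => by
      intro i h1 h2
      show piDown φ n (k + 1)
        (φ (n + k + 1) (vtx (n + k + 2) i (Bpos len n (k+1) i))) = vtx n n (len n n - 1)
      have hblt : bpos len n (k+1) < len (n + k + 1) n := by
        have := gap (len := len) hlen2 hrec n hn k n hn le_rfl
        have hbe := bpos_eq len n k
        omega
      have hstep : φ (n + k + 1) (vtx (n + k + 2) i (Bpos len n (k+1) i))
          = vtx (n + k + 1) n (bpos len n (k+1)) := by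
        exact phiE hrec hphiwalk (N := n + k + 1) h1 (by omega) (by omega) (by omega)
          hblt _ (Or.inr rfl)
      rw [hstep, ← bpos_eq]
      exact Cpos n hn k n hn le_rfl


include hends hlen2 hrec hphi0 hphitop hphiwalk in
lemma BvAux (n : ℕ) (hn : 1 ≤ n) (k : ℕ)
    (hprev : ∀ j', bpos len n k < j' → j' ≤ len (n + k) n →
      piDown φ n k (vtx (n + k) n j') = v0 n) :
    ∀ i j, 1 ≤ i → i ≤ n → Bpos len n k i < j → j ≤ len (n + k + 1) i →
      piDown φ n (k + 1) (vtx (n + k + 1) i j) = v0 n := by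
  intro i j h1 h2 hBj hjle
  show piDown φ n k (φ (n + k) (vtx (n + k + 1) i j)) = v0 n
  have h2' : i ≤ n + k := by omega
  have hlr : len (n + k + 1) i
      = 2 + 2 * ∑ t ∈ Finset.range (n + k + 1 - i), len (n + k) (i + t) :=
    lenrec (len := len) hrec (N := n + k) h1 (by omega)
  rcases Nat.eq_or_lt_of_le hjle with heq | hlt
  · rw [heq, (hends (n + k + 1) i (by omega) (by omega)).2, hphi0 (n + k)]
    exact piDown_v0 hphi0 n k
  by_cases hlast : j = len (n + k + 1) i - 1
  · rw [hlast, phiLast (len := len) hrec hphiwalk h1 h2']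
    exact piDown_v0 hphi0 n k
  have hB1 : 1 ≤ Bpos len n k i := by simp only [Bpos]; omega
  obtain ⟨K, r, hK1, hK2, hr, hdec⟩ := FMdecomp (N := n + k) (len := len)
    (n + k + 1 - i) i (j - 1) (by omega)
  have hK2' : K ≤ n + k := by omega
  have hphi : φ (n + k) (vtx (n + k + 1) i j) = vtx (n + k) K r :=
    phiE hrec hphiwalk h1 h2' hK1 hK2' hr j (by omega)
  rw [hphi]
  rcases Nat.eq_zero_or_pos r with rfl | hr0
  · rw [(hends (n + k) K (by omega) hK2').1]
    exact piDown_v0 hphi0 n k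
  by_cases hKn : n + 1 ≤ K
  · exact Apos hends hphi0 hphitop hphiwalk n k K r hKn hK2' (le_of_lt hr)
  have hsum_succ : ∑ t ∈ Finset.range (K + 1 - i), len (n + k) (i + t)
      = (∑ t ∈ Finset.range (K - i), len (n + k) (i + t)) + len (n + k) K := by
    rw [show K + 1 - i = (K - i) + 1 from by omega, Finset.sum_range_succ,
      show i + (K - i) = K from by omega]
  have hBlow : Bpos len n k i = 1 + 2 * ∑ t ∈ Finset.range (n - i), len (n + k) (i + t)
      + len (n + k) n + bpos len n k := rfl
  have hKeq : K = n := by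
    rcases Nat.lt_or_ge K n with hlt' | hge
    · exfalso
      have hmono : ∑ t ∈ Finset.range (K + 1 - i), len (n + k) (i + t)
          ≤ ∑ t ∈ Finset.range (n - i), len (n + k) (i + t) :=
        Finset.sum_le_sum_of_subset (Finset.range_subset_range.mpr (by omega))
      omega
    · omega
  subst hKeq
  rcases hdec with hdec | hdec
  · exfalso
    omega
  · exact hprev r (by omega) (le_of_lt hr)

include hends hlen2 hrec hphi0 hphitop hphiwalk in
lemma Bv0 (n : ℕ) (hn : 1 ≤ n) : ∀ k i j, 1 ≤ i → i ≤ n → Bpos len n k i < j →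
    j ≤ len (n + k + 1) i → piDown φ n (k + 1) (vtx (n + k + 1) i j) = v0 n
  | 0 => by
      intro i j h1 h2 h3 h4
      refine BvAux hends hlen2 hrec hphi0 hphitop hphiwalk n hn 0 ?_ i j h1 h2 h3 h4
      intro j' hj1 hj2
      have hb : bpos len n 0 = len n n - 1 := rfl
      have hl2 := hlen2 n n hn le_rfl
      replace hj2 : j' ≤ len n n := hj2
      have hj' : j' = len n n := by omega
      show vtx (n + 0) n j' = v0 n
      rw [hj']
      exact (hends n n hn le_rfl).2
  | (k+1) => by
      intro i j h1 h2 h3 h4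
      refine BvAux hends hlen2 hrec hphi0 hphitop hphiwalk n hn (k+1) ?_ i j h1 h2 h3 h4
      intro j' hj1 hj2
      exact Bv0 n hn k n j' hn le_rfl (by rw [bpos_eq]; exact hj1) hj2

end Main

end Stmt13Aux
open Stmt13Aux in
theorem stmt13
    (V : ℕ → Type) [∀ n, TopologicalSpace (V n)] [∀ n, DiscreteTopology (V n)]
    [∀ n, Fintype (V n)]
    (E : ∀ n, V n → V n → Prop) (φ : ∀ n, V (n + 1) → V n)
    (len : ℕ → ℕ → ℕ) (v0 : ∀ n, V n) (vtx : ∀ n, ℕ → ℕ → V n)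
    (hV0 : ∀ u : V 0, u = v0 0)
    (hE0 : ∀ u v : V 0, E 0 u v ↔ u = v0 0 ∧ v = v0 0)
    (hends : ∀ n i, 1 ≤ i → i ≤ n → vtx n i 0 = v0 n ∧ vtx n i (len n i) = v0 n)
    (hlen2 : ∀ n i, 1 ≤ i → i ≤ n → 2 ≤ len n i)
    (hrec : ∀ n i, 1 ≤ i → i ≤ n →
      len (n + 1) i = 2 + 2 * ∑ j ∈ Finset.Icc i n, len n j)
    (hne : ∀ n i j, 1 ≤ i → i ≤ n → 0 < j → j < len n i → vtx n i j ≠ v0 n)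
    (hinj : ∀ n i j i' j', 1 ≤ i → i ≤ n → 1 ≤ i' → i' ≤ n →
      0 < j → j < len n i → 0 < j' → j' < len n i' →
      vtx n i j = vtx n i' j' → i = i' ∧ j = j')
    (hall : ∀ n, 1 ≤ n → ∀ u : V n,
      u = v0 n ∨ ∃ i j, 1 ≤ i ∧ i ≤ n ∧ 0 < j ∧ j < len n i ∧ u = vtx n i j)
    (hE : ∀ n, 1 ≤ n → ∀ u v : V n, E n u v ↔
      (u = v0 n ∧ v = v0 n) ∨
      ∃ i j, 1 ≤ i ∧ i ≤ n ∧ j < len n i ∧ u = vtx n i j ∧ v = vtx n i (j + 1))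
    (hphi0 : ∀ n, φ n (v0 (n + 1)) = v0 n)
    (hphitop : ∀ n j, j ≤ len (n + 1) (n + 1) → φ n (vtx (n + 1) (n + 1) j) = v0 n)
    (hphiwalk : ∀ n i, 1 ≤ i → i ≤ n →
      List.map (φ n) (circList (vtx (n + 1)) i (len (n + 1) i)) =
        v0 n :: (((List.range' i (n + 1 - i)).flatMap fun k =>
          circList (vtx n) k (len n k) ++ circList (vtx n) k (len n k)) ++ [v0 n]))
    (hcov : ∀ n, IsCover (E (n + 1)) (E n) (φ n))
    (f : InvLim V φ ≃ₜ InvLim V φ)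
    (hf : ∀ x y : InvLim V φ, ERel E φ x y ↔ f x = y)
    (m : MetricSpace (InvLim V φ))
    (hm : mtop m = (inferInstance : TopologicalSpace (InvLim V φ)))
    (p : InvLim V φ) (hp : ∀ n, p.1 n = v0 n) :
    ∀ x : InvLim V φ, x ≠ p →
      0 < Filter.limsup (fun k => mdist m ((⇑f)^[k] x) p) Filter.atTop := by
  intro x hxp
  set y : ℕ → InvLim V φ := fun k => (⇑f)^[k] x with hy
  by_contra hc
  push_neg at hc
  have hstep : ∀ k nn, E nn ((y k).1 nn) ((y (k+1)).1 nn) := by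
    intro k nn
    have h : ERel E φ (y k) (y (k+1)) := by
      rw [hf]
      simp only [hy]
      rw [Function.iterate_succ_apply']
    exact h nn
  haveI hcs : CompactSpace (InvLim V φ) := by
    have hclosed : IsClosed {w : ∀ n, V n | ∀ n, φ n (w (n+1)) = w n} := by
      have hEq : {w : ∀ n, V n | ∀ n, φ n (w (n+1)) = w n}
          = ⋂ n, {w : ∀ n, V n | φ n (w (n+1)) = w n} := by
        ext w; simp [Set.mem_iInter]
      rw [hEq]
      refine isClosed_iInter fun n => isClosed_eq ?_ ?_
      · exact (continuous_of_discreteTopology (f := φ n)).comp (continuous_apply (n+1))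
      · exact continuous_apply n
    exact isCompact_iff_compactSpace.mp hclosed.isCompact
  haveI hcs2 : @CompactSpace (InvLim V φ) (mtop m) := by rw [hm]; exact hcs
  obtain ⟨C, hC⟩ : ∃ C, ∀ w w' : InvLim V φ, mdist m w w' ≤ C := by
    have h1 : @IsCompact (InvLim V φ) (mtop m) Set.univ := @isCompact_univ _ (mtop m) hcs2
    have h2 := @IsCompact.isBounded (InvLim V φ) m.toPseudoMetricSpace _ h1
    obtain ⟨C, hC⟩ := (@Metric.isBounded_iff _ m.toPseudoMetricSpace _).mp h2
    exact ⟨C, fun w w' => hC (Set.mem_univ w) (Set.mem_univ w')⟩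
  have hbdd : Filter.IsBoundedUnder (· ≤ ·) Filter.atTop (fun k => mdist m (y k) p) :=
    ⟨C, Filter.eventually_map.mpr (Filter.Eventually.of_forall fun k => hC _ _)⟩
  have hnn : ∀ k, (0:ℝ) ≤ mdist m (y k) p := fun k =>
    @dist_nonneg _ m.toPseudoMetricSpace _ _
  have hbdd0 : Filter.IsBoundedUnder (· ≥ ·) Filter.atTop (fun k => mdist m (y k) p) :=
    ⟨0, Filter.eventually_map.mpr (Filter.Eventually.of_forall hnn)⟩
  have hliminf : (0:ℝ) ≤ Filter.liminf (fun k => mdist m (y k) p) Filter.atTop :=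
    Filter.le_liminf_of_le hbdd.isCoboundedUnder_ge (Filter.Eventually.of_forall hnn)
  have htend0 : Filter.Tendsto (fun k => mdist m (y k) p) Filter.atTop (nhds 0) :=
    tendsto_of_le_liminf_of_limsup_le hliminf hc hbdd hbdd0
  have htendy : Filter.Tendsto y Filter.atTop (@nhds _ (mtop m) p) :=
    (@tendsto_iff_dist_tendsto_zero _ _ m.toPseudoMetricSpace y Filter.atTop p).mpr htend0
  rw [hm] at htendy
  have heven : ∀ nn : ℕ, ∃ K, ∀ k, K ≤ k → (y k).1 nn = v0 nn := by
    intro nn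
    have hcont : Continuous fun w : InvLim V φ => w.1 nn :=
      (continuous_apply nn).comp continuous_subtype_val
    have hU : IsOpen {w : InvLim V φ | w.1 nn = v0 nn} :=
      IsOpen.preimage hcont (isOpen_discrete {v0 nn})
    have hpU : p ∈ {w : InvLim V φ | w.1 nn = v0 nn} := hp nn
    have hev : ∀ᶠ k in Filter.atTop, y k ∈ {w : InvLim V φ | w.1 nn = v0 nn} :=
      htendy (hU.mem_nhds hpU)
    obtain ⟨K, hK⟩ := Filter.eventually_atTop.mp hev
    exact ⟨K, hK⟩
  have hdeath : ∀ nn : ℕ, (∃ k0, (y k0).1 nn ≠ v0 nn) →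
      ∃ t, (y t).1 nn ≠ v0 nn ∧ ∀ k, t < k → (y k).1 nn = v0 nn := by
    intro nn hex
    obtain ⟨k0, hk0⟩ := hex
    obtain ⟨K, hK⟩ := heven nn
    have hbddS : BddAbove {k | (y k).1 nn ≠ v0 nn} := by
      refine ⟨K, fun k hk => ?_⟩
      by_contra hlt
      exact hk (hK k (by omega))
    have hmem := Nat.sSup_mem ⟨k0, hk0⟩ hbddS
    refine ⟨sSup {k | (y k).1 nn ≠ v0 nn}, hmem, fun k hk => ?_⟩
    by_contra hne'
    exact absurd (le_csSup hbddS hne') (not_le.mpr hk)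
  have hcoh : ∀ (w : InvLim V φ) (nn kk : ℕ), piDown φ nn kk (w.1 (nn + kk)) = w.1 nn := by
    intro w nn kk
    induction kk with
    | zero => rfl
    | succ kk ih =>
        show piDown φ nn kk (φ (nn + kk) (w.1 (nn + kk + 1))) = w.1 nn
        rw [w.2 (nn + kk)]
        exact ih
  have hcoh' : ∀ (w : InvLim V φ) (nn kk : ℕ),
      piDown φ nn (kk + 1) (w.1 (nn + kk + 1)) = w.1 nn := fun w nn kk => hcoh w nn (kk+1)
  have hB1 : ∀ a b c, 1 ≤ Bpos len a b c := by
    intro a b c; simp only [Bpos]; omega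
  have hF1 : ∀ (N I J : ℕ) (v : V N), 1 ≤ I → I ≤ N → 0 < J → J < len N I →
      E N (vtx N I J) v → v = vtx N I (J+1) := by
    intro N I J v hI1 hI2 hJ0 hJl hEv
    have hN1 : 1 ≤ N := le_trans hI1 hI2
    rcases (hE N hN1 _ _).mp hEv with ⟨hu, _⟩ | ⟨i', j', hi1, hi2, hjl, hu, hv⟩
    · exact absurd hu (hne N I J hI1 hI2 hJ0 hJl)
    · rcases Nat.eq_zero_or_pos j' with rfl | hj0
      · rw [(hends N i' hi1 hi2).1] at hu
        exact absurd hu (hne N I J hI1 hI2 hJ0 hJl)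
      · obtain ⟨h1, h2⟩ := hinj N I J i' j' hI1 hI2 hi1 hi2 hJ0 hJl hj0 hjl hu
        subst h1; subst h2
        exact hv
  have hFWD : ∀ (N I J t' : ℕ), 1 ≤ I → I ≤ N → 0 < J → (y t').1 N = vtx N I J →
      ∀ s, J + s ≤ len N I → (y (t' + s)).1 N = vtx N I (J + s) := by
    intro N I J t' hI1 hI2 hJ0 hbase s
    induction s with
    | zero => intro _; simpa using hbase
    | succ s ih =>
        intro hs
        have hprev := ih (by omega)
        have hlt : J + s < len N I := by omega
        have hE' := hstep (t' + s) N
        rw [hprev] at hE'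
        have hres := hF1 N I (J + s) _ hI1 hI2 (by omega) hlt hE'
        exact hres
  have hCLS : ∀ nn t, 1 ≤ nn → (y t).1 nn ≠ v0 nn → (∀ k, t < k → (y k).1 nn = v0 nn) →
      ∀ kk, (y t).1 (nn + kk + 1) = vtx (nn + kk + 1) nn (Bpos len nn kk nn) := by
    intro nn t h1 hne0 hdead
    have hclass : ∀ kk, ∃ i, 1 ≤ i ∧ i ≤ nn ∧
        (y t).1 (nn + kk + 1) = vtx (nn + kk + 1) i (Bpos len nn kk i) := by
      intro kk
      have hune : (y t).1 (nn + kk + 1) ≠ v0 (nn + kk + 1) := by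
        intro h
        apply hne0
        rw [← hcoh' (y t) nn kk, h]
        exact piDown_v0 hphi0 nn (kk+1)
      rcases hall (nn + kk + 1) (by omega) ((y t).1 (nn + kk + 1)) with h | ⟨i, j, hi1, hi2, hj0, hjl, hu⟩
      · exact absurd h hune
      have hile : i ≤ nn := by
        by_contra hgt
        apply hne0
        rw [← hcoh' (y t) nn kk, hu]
        exact Apos hends hphi0 hphitop hphiwalk nn (kk+1) i j (by omega) hi2 (le_of_lt hjl)
      have hpost : ∀ j', j < j' → j' ≤ len (nn + kk + 1) i →
          piDown φ nn (kk + 1) (vtx (nn + kk + 1) i j') = v0 nn := by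
        intro j' hjj hjle
        obtain ⟨s, rfl⟩ : ∃ s, j' = j + s := ⟨j' - j, by omega⟩
        have hys : (y (t + s)).1 (nn + kk + 1) = vtx (nn + kk + 1) i (j + s) :=
          hFWD (nn + kk + 1) i j t hi1 (by omega) hj0 hu s hjle
        rw [← hys, hcoh' (y (t + s)) nn kk]
        exact hdead (t + s) (by omega)
      have hjB : j = Bpos len nn kk i := by
        rcases lt_trichotomy j (Bpos len nn kk i) with hl | he | hg
        · exfalso
          have hgap' := gap (len := len) hlen2 hrec nn h1 kk i hi1 hile
          have hpb := hpost (Bpos len nn kk i) hl (by omega)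
          rw [Cpos (len := len) hlen2 hrec hphiwalk nn h1 kk i hi1 hile] at hpb
          have hll := hlen2 nn nn h1 le_rfl
          exact hne nn nn (len nn nn - 1) h1 le_rfl (by omega) (by omega) hpb
        · exact he
        · exfalso
          apply hne0
          rw [← hcoh' (y t) nn kk, hu]
          exact Bv0 hends hlen2 hrec hphi0 hphitop hphiwalk nn h1 kk i j hi1 hile hg
            (le_of_lt hjl)
      exact ⟨i, hi1, hile, by rw [hu, hjB]⟩
    intro kk
    obtain ⟨i, hi1, hi2, hu⟩ := hclass (kk + 1)
    have hu' : (y t).1 (nn + kk + 2) = vtx (nn + kk + 2) i (Bpos len nn (kk+1) i) := hu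
    have hproj : (y t).1 (nn + kk + 1) = φ (nn + kk + 1) ((y t).1 (nn + kk + 2)) :=
      ((y t).2 (nn + kk + 1)).symm
    have hblt : bpos len nn (kk+1) < len (nn + kk + 1) nn := by
      have hg := gap (len := len) hlen2 hrec nn h1 kk nn h1 le_rfl
      have hbe := bpos_eq len nn kk
      omega
    have hphi2 : φ (nn + kk + 1) (vtx (nn + kk + 2) i (Bpos len nn (kk+1) i))
        = vtx (nn + kk + 1) nn (bpos len nn (kk+1)) :=
      phiE (len := len) hrec hphiwalk (N := nn + kk + 1) hi1 (by omega) (by omega) (by omega)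
        hblt _ (Or.inr rfl)
    rw [hproj, hu', hphi2, ← bpos_eq]
  -- locate a nonzero coordinate of x
  obtain ⟨n0, hn0⟩ : ∃ nn, x.1 nn ≠ v0 nn := by
    by_contra h
    push_neg at h
    apply hxp
    apply Subtype.ext
    funext nn
    rw [h nn, ← hp nn]
  have hn1 : 1 ≤ n0 := by
    rcases Nat.eq_zero_or_pos n0 with rfl | h
    · exact absurd (hV0 (x.1 0)) hn0
    · exact h
  have hy0 : y 0 = x := rfl
  have hx1 : x.1 (n0 + 1) ≠ v0 (n0 + 1) := by
    intro h
    apply hn0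
    rw [← x.2 n0, h]
    exact hphi0 n0
  obtain ⟨t, htne, htdead⟩ := hdeath n0 ⟨0, by rw [hy0]; exact hn0⟩
  obtain ⟨t', ht'ne, ht'dead⟩ := hdeath (n0 + 1) ⟨0, by rw [hy0]; exact hx1⟩
  have hyt1 : (y t).1 (n0 + 1) = vtx (n0 + 1) n0 (Bpos len n0 0 n0) :=
    hCLS n0 t hn1 htne htdead 0
  have hgap0 : Bpos len n0 0 n0 + 2 ≤ len (n0 + 1) n0 :=
    gap (len := len) hlen2 hrec n0 hn1 0 n0 hn1 le_rfl
  have htt' : t ≤ t' := by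
    by_contra h
    have hvv : (y t).1 (n0 + 1) = v0 (n0 + 1) := ht'dead t (by omega)
    rw [hyt1] at hvv
    exact hne (n0 + 1) n0 (Bpos len n0 0 n0) hn1 (by omega) (by have := hB1 n0 0 n0; omega)
      (by omega) hvv
  set s0 := t' - t with hs0
  have h1 := hCLS n0 t hn1 htne htdead (s0 + 1)
  have hgap1 := gap (len := len) hlen2 hrec n0 hn1 (s0 + 1) n0 hn1 le_rfl
  have h3 := hFWD (n0 + (s0 + 1) + 1) n0 (Bpos len n0 (s0 + 1) n0) t hn1 (by omega)
    (by have := hB1 n0 (s0+1) n0; omega) h1 s0 (by omega)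
  rw [show t + s0 = t' from by omega] at h3
  have h2 := hCLS (n0 + 1) t' (by omega) ht'ne ht'dead s0
  rw [show (n0 + 1) + s0 + 1 = n0 + (s0 + 1) + 1 from by omega] at h2
  have hgap2 := gap (len := len) hlen2 hrec (n0 + 1) (by omega) s0 (n0 + 1) (by omega) le_rfl
  rw [show (n0 + 1) + s0 + 1 = n0 + (s0 + 1) + 1 from by omega] at hgap2
  rw [h2] at h3
  have hfin := hinj (n0 + (s0 + 1) + 1) (n0 + 1) (Bpos len (n0 + 1) s0 (n0 + 1)) n0
    (Bpos len n0 (s0 + 1) n0 + s0) (by omega) (by omega) hn1 (by omega)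
    (by have := hB1 (n0+1) s0 (n0+1); omega) (by omega)
    (by have := hB1 n0 (s0+1) n0; omega) (by omega) h3
  omega
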